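/- Let S be a semitopological semigroup and X a norm-closed linear subspace of ℓ∞(S) containing the constant functions and invariant under all left and right translations, and suppose X has a left invariant mean. Suppose that S acts on a nonempty weakly compact subset K of a Banach space E so that the action is weakly separately continuous and there exists y ∈ K such that for every weakly continuous complex-valued function f on K, the function s ↦ f(s·y) belongs to X. Then there exists a probability Radon measure μ on K (with the weak topology) such that μ(s⁻¹A) = μ(A) for every Borel subset A of K and every s ∈ S, where s⁻¹A = {x ∈ K : s·x ∈ A}. -/

import Mathlib

open scoped BoundedContinuousFunction

/-- A semitopological semigroup: a semigroup with a topology in which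
multiplication is separately continuous. -/
class SemitopoSemigroup (S : Type*) [Semigroup S] [TopologicalSpace S] : Prop where
  cont_left : ∀ t : S, Continuous fun s : S => t * s
  cont_right : ∀ t : S, Continuous fun s : S => s * t

section Ell

variable {S : Type*}

/-- Left translation: `(l_s f)(t) = f (s * t)`. -/
def lTrans [Mul S] (s : S) (f : S → ℂ) : S → ℂ := fun t => f (s * t)

/-- Right translation: `(r_s f)(t) = f (t * s)`. -/
def rTrans [Mul S] (s : S) (f : S → ℂ) : S → ℂ := fun t => f (t * s)

/-- A bounded complex-valued function, i.e. an element of `ℓ^∞(S)`. -/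
def BddFun (f : S → ℂ) : Prop := ∃ C : ℝ, ∀ t, ‖f t‖ ≤ C

/-- The supremum norm on `ℓ^∞(S)`. -/
noncomputable def supNorm (f : S → ℂ) : ℝ := ⨆ t, ‖f t‖

/-- `X` is a norm-closed linear subspace of `ℓ^∞(S)` containing the constants and
invariant under all left and right translations. -/
structure IsTransInvSubspace [Semigroup S] (X : Set (S → ℂ)) : Prop where
  bdd : ∀ f ∈ X, BddFun f
  add_mem : ∀ f ∈ X, ∀ g ∈ X, f + g ∈ X
  smul_mem : ∀ (c : ℂ), ∀ f ∈ X, c • f ∈ X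
  const_mem : ∀ c : ℂ, (fun _ : S => c) ∈ X
  normClosed : ∀ f : S → ℂ, BddFun f →
    (∀ ε > 0, ∃ g ∈ X, ∀ t, ‖f t - g t‖ ≤ ε) → f ∈ X
  lTrans_mem : ∀ (s : S), ∀ f ∈ X, lTrans s f ∈ X
  rTrans_mem : ∀ (s : S), ∀ f ∈ X, rTrans s f ∈ X

/-- `m` is a left invariant mean on `X`: a linear functional with `‖m‖ = m 1 = 1`
which is invariant under left translations. -/
structure IsLIM [Semigroup S] (X : Set (S → ℂ)) (m : (S → ℂ) → ℂ) : Prop where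
  add : ∀ f ∈ X, ∀ g ∈ X, m (f + g) = m f + m g
  smul : ∀ (c : ℂ), ∀ f ∈ X, m (c • f) = c * m f
  norm_le : ∀ f ∈ X, ‖m f‖ ≤ supNorm f
  map_one : m (fun _ : S => (1 : ℂ)) = 1
  left_inv : ∀ (s : S), ∀ f ∈ X, m (lTrans s f) = m f

/-- `X` has a left invariant mean. -/
def HasLIM [Semigroup S] (X : Set (S → ℂ)) : Prop := ∃ m, IsLIM X m

end Ell

/-- The weak topology on a normed space `E` over `𝕜`. -/
noncomputable def weakTop (𝕜 E : Type*) [NontriviallyNormedField 𝕜] [NormedAddCommGroup E]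
    [NormedSpace 𝕜 E] : TopologicalSpace E :=
  ⨅ φ : E →L[𝕜] 𝕜, TopologicalSpace.induced φ inferInstance

section Semitopo

variable {S : Type*} [Semigroup S] [TopologicalSpace S] [SemitopoSemigroup S]

/-- Left translation as a map on `C(S)`, the bounded continuous functions. -/
noncomputable def lTransB (s : S) (F : S →ᵇ ℂ) : S →ᵇ ℂ :=
  F.compContinuous ⟨fun t => s * t, SemitopoSemigroup.cont_left s⟩

/-- Right translation as a map on `C(S)`, the bounded continuous functions. -/
noncomputable def rTransB (s : S) (F : S →ᵇ ℂ) : S →ᵇ ℂ :=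
  F.compContinuous ⟨fun t => t * s, SemitopoSemigroup.cont_right s⟩

/-- `F ∈ C(S)` is weakly almost periodic: its left orbit is relatively compact in
the weak topology of `C(S)`. -/
def IsWAPb (F : S →ᵇ ℂ) : Prop :=
  @IsCompact _ (weakTop ℂ (S →ᵇ ℂ))
    (@closure _ (weakTop ℂ (S →ᵇ ℂ)) (Set.range fun s => lTransB s F))

/-- `F ∈ C(S)` is almost periodic: its left orbit is relatively compact in
the norm topology of `C(S)`. -/
def IsAPb (F : S →ᵇ ℂ) : Prop :=
  IsCompact (closure (Set.range fun s => lTransB s F))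

/-- `F ∈ C(S)` is left uniformly continuous: `s ↦ l_s F` is norm continuous. -/
def IsLUCb (F : S →ᵇ ℂ) : Prop := Continuous fun s => lTransB s F

/-- `WAP(S)` as a subset of `ℓ^∞(S)`. -/
def WAPset (S : Type*) [Semigroup S] [TopologicalSpace S] [SemitopoSemigroup S] :
    Set (S → ℂ) := {f | ∃ F : S →ᵇ ℂ, ⇑F = f ∧ IsWAPb F}

/-- `AP(S)` as a subset of `ℓ^∞(S)`. -/
def APset (S : Type*) [Semigroup S] [TopologicalSpace S] [SemitopoSemigroup S] :
    Set (S → ℂ) := {f | ∃ F : S →ᵇ ℂ, ⇑F = f ∧ IsAPb F}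

/-- `LUC(S)` as a subset of `ℓ^∞(S)`. -/
def LUCset (S : Type*) [Semigroup S] [TopologicalSpace S] [SemitopoSemigroup S] :
    Set (S → ℂ) := {f | ∃ F : S →ᵇ ℂ, ⇑F = f ∧ IsLUCb F}

end Semitopo

section Action

variable {S : Type*} {E : Type*} [NormedAddCommGroup E] [NormedSpace ℝ E]

/-- `act` is an action of the semigroup `S` on the set `K`. -/
def IsActionOn [Semigroup S] (act : S → E → E) (K : Set E) : Prop :=
  (∀ s : S, Set.MapsTo (act s) K K) ∧
    ∀ s s' : S, ∀ x ∈ K, act s (act s' x) = act (s * s') x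

/-- The action is nonexpansive on `K`. -/
def NonexpansiveOn (act : S → E → E) (K : Set E) : Prop :=
  ∀ s : S, ∀ x ∈ K, ∀ y ∈ K, ‖act s x - act s y‖ ≤ ‖x - y‖

/-- The action is weakly separately continuous on `K`. -/
def WeaklySepContOn [TopologicalSpace S] (act : S → E → E) (K : Set E) : Prop :=
  (∀ s : S, @ContinuousOn E E (weakTop ℝ E) (weakTop ℝ E) (act s) K) ∧
    (∀ x ∈ K, @Continuous S E _ (weakTop ℝ E) fun s => act s x)

/-- The action is jointly weakly continuous on `K`. -/
def JointlyWeaklyContOn [TopologicalSpace S] (act : S → E → E) (K : Set E) : Prop :=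
  @ContinuousOn (S × E) E (@instTopologicalSpaceProd S E _ (weakTop ℝ E)) (weakTop ℝ E)
    (fun p => act p.1 p.2) (Set.univ ×ˢ K)

/-- The action is weakly equicontinuous on `K`: the family `{x ↦ s • x : s ∈ S}` is
equicontinuous for the weak topology on `K`. -/
def WeaklyEquicontOn (act : S → E → E) (K : Set E) : Prop :=
  ∀ x ∈ K, ∀ W ∈ @nhds E (weakTop ℝ E) 0,
    ∃ U ∈ @nhdsWithin E (weakTop ℝ E) x K, ∀ y ∈ U, ∀ s : S, act s y - act s x ∈ W

/-- The action is weakly quasi-equicontinuous on `K`: every map in the closure of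
`{x ↦ s • x : s ∈ S}` in `K^K` (with `K` carrying the weak topology) is continuous. -/
def WeaklyQuasiEquicontOn (act : S → E → E) (K : Set E) : Prop :=
  ∀ T ∈ @closure (↥K → ↥K)
      (@Pi.topologicalSpace ↥K (fun _ => ↥K)
        (fun _ => TopologicalSpace.induced Subtype.val (weakTop ℝ E)))
      {F : ↥K → ↥K | ∃ s : S, ∀ x : ↥K, (F x : E) = act s x},
    @Continuous ↥K ↥K (TopologicalSpace.induced Subtype.val (weakTop ℝ E))
      (TopologicalSpace.induced Subtype.val (weakTop ℝ E)) T

end Action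

/-- The weak topology of `E` restricted to a subset `K`. -/
noncomputable def weakSubTop (E : Type*) [NormedAddCommGroup E] [NormedSpace ℝ E]
    (K : Set E) : TopologicalSpace ↥K :=
  TopologicalSpace.induced Subtype.val (weakTop ℝ E)


/-! ### Auxiliary material for the proof -/

open scoped NNReal ENNReal
open MeasureTheory TopologicalSpace Set BoundedContinuousFunction

set_option linter.unusedSectionVars false

section RMK

variable {Y : Type*} [TopologicalSpace Y] [CompactSpace Y] [T2Space Y]
  [MeasurableSpace Y] [BorelSpace Y]
  (Λ : (Y →ᵇ ℝ≥0) →ₗ[ℝ≥0] ℝ≥0)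

/-- product of two `ℝ≥0`-valued bounded continuous functions on a compact space -/
noncomputable def bcMul (f g : Y →ᵇ ℝ≥0) : Y →ᵇ ℝ≥0 :=
  mkOfCompact ⟨fun x => f x * g x, (f.continuous.mul g.continuous)⟩

@[simp] lemma bcMul_apply (f g : Y →ᵇ ℝ≥0) (x : Y) : bcMul f g x = f x * g x := rfl

lemma lam_mono {f g : Y →ᵇ ℝ≥0} (h : ∀ x, f x ≤ g x) : Λ f ≤ Λ g := by
  let d : Y →ᵇ ℝ≥0 := mkOfCompact ⟨fun x => g x - f x, (g.continuous.sub f.continuous)⟩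
  have hfd : f + d = g :=
    BoundedContinuousFunction.ext fun x => add_tsub_cancel_of_le (h x)
  calc Λ f ≤ Λ f + Λ d := le_self_add
    _ = Λ (f + d) := (map_add Λ f d).symm
    _ = Λ g := by rw [hfd]

/-- `Λ` viewed on compactly supported functions. -/
noncomputable def lamC : CompactlySupportedContinuousMap Y ℝ≥0 →ₗ[ℝ≥0] ℝ≥0 where
  toFun g := Λ (mkOfCompact (g : C(Y, ℝ≥0)))
  map_add' f g := by
    rw [← map_add]
    congr 1
  map_smul' c f := by
    rw [← _root_.map_smul]
    congr 1

/-- The Riesz content associated to `Λ`, as a `Content`. -/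
noncomputable def rieszCont : Content Y := rieszContent (lamC Λ)

lemma rieszCont_regular : Content.ContentRegular (rieszCont Λ) :=
  contentRegular_rieszContent _


lemma rieszContentAux_preimage_le {T : Y → Y} (hT : Continuous T)
    (hinv : ∀ f : Y →ᵇ ℝ≥0, Λ (f.compContinuous ⟨T, hT⟩) = Λ f)
    (D : Compacts Y) (Dpre : Compacts Y) (hpre : (Dpre : Set Y) = T ⁻¹' (D : Set Y)) :
    rieszContentAux (lamC Λ) Dpre ≤ rieszContentAux (lamC Λ) D := by
  refine le_csInf (rieszContentAux_image_nonempty (lamC Λ) D) ?_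
  rintro b ⟨g, hg, rfl⟩
  refine le_trans (rieszContentAux_le (lamC Λ)
    (f := CompactlySupportedContinuousMap.continuousMapEquiv ((g : C(Y, ℝ≥0)).comp ⟨T, hT⟩)) ?_)
    (le_of_eq ((congrArg Λ (by ext; rfl)).trans (hinv (mkOfCompact (g : C(Y, ℝ≥0))))))
  intro x hx
  have hx' : x ∈ T ⁻¹' (D : Set Y) := hpre ▸ (hx : x ∈ (Dpre : Set Y))
  exact hg (T x) hx'

theorem rmk_invariant (hone : Λ (1 : Y →ᵇ ℝ≥0) = 1) :
    ∃ μ : Measure Y, μ Set.univ = 1 ∧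
      (∀ A : Set Y, MeasurableSet A →
        μ A = ⨆ (C : Set Y) (_ : C ⊆ A ∧ IsCompact C), μ C) ∧
      (∀ T : Y → Y, ∀ hT : Continuous T,
        (∀ f : Y →ᵇ ℝ≥0, Λ (f.compContinuous ⟨T, hT⟩) = Λ f) →
        ∀ A : Set Y, MeasurableSet A → μ (T ⁻¹' A) = μ A) := by
  set μm := (rieszCont Λ).measure with hμm
  have hcpt : ∀ (D : Set Y) (hD : IsCompact D), μm D = rieszContentAux (lamC Λ) ⟨D, hD⟩ :=
    fun D hD => (rieszCont Λ).measure_eq_content_of_regular (rieszCont_regular Λ) ⟨D, hD⟩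
  have huniv : μm Set.univ = 1 := by
    have h1 : μm Set.univ = rieszContentAux (lamC Λ) ⟨Set.univ, isCompact_univ⟩ :=
      hcpt Set.univ isCompact_univ
    have h2 : rieszContentAux (lamC Λ) ⟨Set.univ, isCompact_univ⟩ = 1 := by
      refine le_antisymm ?_ ?_
      · have := rieszContentAux_le (lamC Λ) (K := ⟨Set.univ, isCompact_univ⟩)
          (f := CompactlySupportedContinuousMap.continuousMapEquiv 1)
          (fun x _ => le_rfl)
        exact this.trans (le_of_eq ((congrArg Λ (by ext; rfl)).trans hone))
      · refine le_csInf (rieszContentAux_image_nonempty (lamC Λ) _) ?_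
        rintro b ⟨g, hg, rfl⟩
        rw [← hone]
        exact lam_mono Λ fun x => hg x trivial
    rw [h1, h2, ENNReal.coe_one]
  haveI : IsFiniteMeasure μm := ⟨by rw [huniv]; exact ENNReal.one_lt_top⟩
  refine ⟨μm, huniv, ?_, ?_⟩
  · intro A hA
    simp_rw [iSup_and]
    rw [← hA.measure_eq_iSup_isCompact μm]
  · intro T hT hinv A hA
    have key : ∀ B : Set Y, MeasurableSet B → μm (T ⁻¹' B) ≤ μm B := by
      intro B hB
      have hpreB : MeasurableSet (T ⁻¹' B) := hB.preimage hT.measurable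
      rw [hpreB.measure_eq_iSup_isCompact μm]
      refine iSup_le fun D => iSup_le fun hDsub => iSup_le fun hD => ?_
      have hTD : IsCompact (T '' D) := hD.image hT
      have hTDsub : T '' D ⊆ B := Set.image_subset_iff.2 hDsub
      have hpre2 : IsCompact (T ⁻¹' (T '' D)) :=
        (hTD.isClosed.preimage hT).isCompact
      calc μm D ≤ μm (T ⁻¹' (T '' D)) := measure_mono (Set.subset_preimage_image T D)
        _ = rieszContentAux (lamC Λ) ⟨T ⁻¹' (T '' D), hpre2⟩ := hcpt _ hpre2
        _ ≤ rieszContentAux (lamC Λ) ⟨T '' D, hTD⟩ := by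
            exact_mod_cast ENNReal.coe_le_coe.2
              (rieszContentAux_preimage_le Λ hT hinv ⟨T '' D, hTD⟩ ⟨T ⁻¹' (T '' D), hpre2⟩ rfl)
        _ = μm (T '' D) := (hcpt _ hTD).symm
        _ ≤ μm B := measure_mono hTDsub
    have hpreA : MeasurableSet (T ⁻¹' A) := hA.preimage hT.measurable
    have h1 : μm (T ⁻¹' A) + μm ((T ⁻¹' A)ᶜ) = 1 := by
      rw [measure_add_measure_compl hpreA, huniv]
    have h2 : μm A + μm Aᶜ = 1 := by
      rw [measure_add_measure_compl hA, huniv]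
    have hle1 : μm (T ⁻¹' A) ≤ μm A := key A hA
    have hle2 : μm ((T ⁻¹' A)ᶜ) ≤ μm Aᶜ := by
      rw [← Set.preimage_compl]
      exact key Aᶜ hA.compl
    refine le_antisymm hle1 ?_
    have hfin : μm Aᶜ ≠ ⊤ := (measure_lt_top μm _).ne
    have : μm A + μm Aᶜ ≤ μm (T ⁻¹' A) + μm Aᶜ := by
      calc μm A + μm Aᶜ = μm (T ⁻¹' A) + μm ((T ⁻¹' A)ᶜ) := by rw [h1, h2]
        _ ≤ μm (T ⁻¹' A) + μm Aᶜ := add_le_add le_rfl hle2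
    exact (ENNReal.add_le_add_iff_right hfin).1 this

end RMK


section MeanAux

variable {S : Type*} [Semigroup S] [Nonempty S] {X : Set (S → ℂ)} {m : (S → ℂ) → ℂ}

theorem mean_real_bound (hX : IsTransInvSubspace X) (hm : IsLIM X m) {f : S → ℂ} (hf : f ∈ X)
    (him : ∀ t, (f t).im = 0) {C : ℝ} (hC : 0 ≤ C) (hbd : ∀ t, |(f t).re| ≤ C) :
    (m f).im = 0 ∧ |(m f).re| ≤ C := by
  have key : ∀ r : ℝ, (m f).re ^ 2 + ((m f).im + r) ^ 2 ≤ C ^ 2 + r ^ 2 := by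
    intro r
    set g : S → ℂ := fun _ => (1 : ℂ) with hg
    have hgX : g ∈ X := hX.const_mem 1
    set h : S → ℂ := f + (Complex.I * r) • g with hh
    have hhX : h ∈ X := hX.add_mem f hf _ (hX.smul_mem _ g hgX)
    have hmh : m h = m f + Complex.I * r := by
      rw [hh, hm.add f hf _ (hX.smul_mem _ g hgX), hm.smul _ g hgX, hm.map_one, mul_one]
    have hsq : 0 ≤ C ^ 2 + r ^ 2 := by positivity
    have hnorm : ∀ t, ‖h t‖ ≤ Real.sqrt (C ^ 2 + r ^ 2) := by
      intro t
      have hht : h t = f t + Complex.I * r := by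
        simp [hh, hg, Pi.add_apply, Pi.smul_apply, smul_eq_mul, mul_one]
      have hre : (h t).re = (f t).re := by rw [hht]; simp
      have him' : (h t).im = r := by rw [hht]; simp [him t]
      have : ‖h t‖ = Real.sqrt ((f t).re ^ 2 + r ^ 2) := by
        rw [Complex.norm_def, Complex.normSq_apply, hre, him']
        ring_nf
      rw [this]
      apply Real.sqrt_le_sqrt
      have : (f t).re ^ 2 ≤ C ^ 2 := by
        have h1 := hbd t
        nlinarith [abs_nonneg ((f t).re), sq_abs ((f t).re)]
      linarith
    have hsup : supNorm h ≤ Real.sqrt (C ^ 2 + r ^ 2) := ciSup_le hnorm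
    have h1 : ‖m h‖ ≤ Real.sqrt (C ^ 2 + r ^ 2) := (hm.norm_le h hhX).trans hsup
    have h2 : ‖m h‖ ^ 2 ≤ C ^ 2 + r ^ 2 := by
      have := pow_le_pow_left₀ (norm_nonneg (m h)) h1 2
      rwa [Real.sq_sqrt hsq] at this
    have h3 : ‖m h‖ ^ 2 = (m f).re ^ 2 + ((m f).im + r) ^ 2 := by
      rw [hmh, Complex.sq_norm, Complex.normSq_apply]
      simp only [Complex.add_re, Complex.add_im, Complex.mul_re, Complex.mul_im,
        Complex.I_re, Complex.I_im, Complex.ofReal_re, Complex.ofReal_im]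
      ring
    linarith [h2, h3.symm.le, h3.le]
  have expand : ∀ r : ℝ, 2 * (m f).im * r ≤ C ^ 2 := by
    intro r
    have hk := key r
    nlinarith [sq_nonneg ((m f).re), sq_nonneg ((m f).im)]
  have him0 : (m f).im = 0 := by
    by_contra hne
    have h2' := expand ((C ^ 2 + 1) / (2 * (m f).im))
    have heq : 2 * (m f).im * ((C ^ 2 + 1) / (2 * (m f).im)) = C ^ 2 + 1 := by
      field_simp
    rw [heq] at h2'
    linarith
  refine ⟨him0, ?_⟩
  have hk0 := key 0
  rw [him0] at hk0
  simp only [add_zero, zero_add] at hk0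
  have hre2 : (m f).re ^ 2 ≤ C ^ 2 := by nlinarith [sq_nonneg (0 : ℝ)]
  exact abs_le.mpr ⟨by nlinarith, by nlinarith⟩

theorem mean_interval (hX : IsTransInvSubspace X) (hm : IsLIM X m) {f : S → ℂ} (hf : f ∈ X)
    (him : ∀ t, (f t).im = 0) {C : ℝ} (hC : 0 ≤ C) (h0 : ∀ t, 0 ≤ (f t).re)
    (h1 : ∀ t, (f t).re ≤ C) :
    (m f).im = 0 ∧ 0 ≤ (m f).re ∧ (m f).re ≤ C := by
  set g : S → ℂ := f + ((-(C / 2) : ℝ) : ℂ) • (fun _ => (1 : ℂ)) with hg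
  have h1X : (fun _ : S => (1 : ℂ)) ∈ X := hX.const_mem 1
  have hgX : g ∈ X := hX.add_mem f hf _ (hX.smul_mem _ _ h1X)
  have hgim : ∀ t, (g t).im = 0 := by
    intro t
    simp [hg, him t]
  have hgbd : ∀ t, |(g t).re| ≤ C / 2 := by
    intro t
    have hgre : (g t).re = (f t).re - C / 2 := by
      simp [hg]
      ring
    rw [hgre]
    exact abs_le.mpr ⟨by linarith [h0 t], by linarith [h1 t]⟩
  obtain ⟨him', hbd'⟩ := mean_real_bound hX hm hgX hgim (by linarith) hgbd
  have hmg : m g = m f + ((-(C / 2) : ℝ) : ℂ) := by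
    rw [hg, hm.add f hf _ (hX.smul_mem _ _ h1X), hm.smul _ _ h1X, hm.map_one, mul_one]
  have hre : (m g).re = (m f).re - C / 2 := by
    rw [hmg]
    simp
    ring
  have himeq : (m f).im = 0 := by
    have : (m g).im = (m f).im := by rw [hmg]; simp
    rw [← this]; exact him'
  rw [hre] at hbd'
  have := abs_le.mp hbd'
  exact ⟨himeq, by linarith [this.1], by linarith [this.2]⟩

end MeanAux

/-- The weak topology on a real normed space is Hausdorff. -/
lemma t2_weakTop (E : Type*) [NormedAddCommGroup E] [NormedSpace ℝ E] :
    @T2Space E (weakTop ℝ E) := by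
  have hsep : ∀ x y : E, x ≠ y → ∃ φ : E →L[ℝ] ℝ, φ x ≠ φ y := fun x y hxy =>
    SeparatingDual.exists_separating_of_ne hxy
  letI := weakTop ℝ E
  constructor
  intro x y hxy
  obtain ⟨φ, hφ⟩ := hsep x y hxy
  have hcont : @Continuous E ℝ (weakTop ℝ E) _ fun z => φ z := by
    refine continuous_iInf_dom (i := φ) ?_
    exact continuous_induced_dom
  exact separated_by_continuous hcont hφ


/-- under the hypotheses of Lemma `Lem`, there exists a probability
Radon measure `μ` on `K` (with the weak topology) which is invariant under the action:
`μ (s⁻¹ A) = μ A` for every Borel set `A ⊆ K` and every `s ∈ S`, where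
`s⁻¹A = {x ∈ K : s • x ∈ A}` is the preimage of `A` under the restricted action map. -/
theorem exists_invariant_radon_probability_measure (S : Type*) [Semigroup S]
    [TopologicalSpace S] [T2Space S] [SemitopoSemigroup S]
    (X : Set (S → ℂ)) (hX : IsTransInvSubspace X) (hLIM : HasLIM X)
    (E : Type*) [NormedAddCommGroup E] [NormedSpace ℝ E] [CompleteSpace E]
    (K : Set E) (act : S → E → E)
    (hne : K.Nonempty) (hcomp : @IsCompact E (weakTop ℝ E) K)
    (hact : IsActionOn act K) (hsc : WeaklySepContOn act K)
    (y : K) (hy : ∀ f : E → ℂ, @ContinuousOn E ℂ (weakTop ℝ E) _ f K →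
      (fun s : S => f (act s y)) ∈ X) :
    ∃ μ : @MeasureTheory.Measure ↥K (@borel ↥K (weakSubTop E K)),
      μ Set.univ = 1 ∧
      (∀ A : Set ↥K, @MeasurableSet ↥K (@borel ↥K (weakSubTop E K)) A →
        μ A = ⨆ (C : Set ↥K) (_ : C ⊆ A ∧ @IsCompact ↥K (weakSubTop E K) C), μ C) ∧
      ∀ s : S, ∀ A : Set ↥K, @MeasurableSet ↥K (@borel ↥K (weakSubTop E K)) A →
        μ (Set.MapsTo.restrict (act s) K K (hact.1 s) ⁻¹' A) = μ A := by
  classical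
  obtain ⟨m, hm⟩ := hLIM
  -- `S` is nonempty, since `X` admits a mean
  have hSne : Nonempty S := by
    by_contra hS
    haveI := not_nonempty_iff.mp hS
    have h1 : supNorm (fun _ : S => (1 : ℂ)) = 0 := by
      simp [supNorm, Real.iSup_of_isEmpty]
    have h2 := hm.norm_le _ (hX.const_mem 1)
    rw [hm.map_one, h1] at h2
    norm_num at h2
  haveI := hSne
  letI tK : TopologicalSpace ↥K := weakSubTop E K
  letI mK : MeasurableSpace ↥K := @borel ↥K tK
  haveI hbK : @BorelSpace ↥K tK mK := ⟨rfl⟩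
  haveI hcK : CompactSpace ↥K := (@isCompact_iff_compactSpace E (weakTop ℝ E) K).mp hcomp
  haveI ht2E : @T2Space E (weakTop ℝ E) := t2_weakTop E
  haveI ht2K : T2Space ↥K := by
    constructor
    intro a b hab
    have hne' : (a : E) ≠ (b : E) := fun h => hab (Subtype.ext h)
    have hval : @Continuous ↥K E tK (weakTop ℝ E) Subtype.val := continuous_induced_dom
    obtain ⟨u, v, hu, hv, hau, hbv, huv⟩ := @t2_separation E (weakTop ℝ E) ht2E _ _ hne'
    exact ⟨Subtype.val ⁻¹' u, Subtype.val ⁻¹' v, @Continuous.isOpen_preimage ↥K E tK (weakTop ℝ E) Subtype.val hval u hu,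
      @Continuous.isOpen_preimage ↥K E tK (weakTop ℝ E) Subtype.val hval v hv,
      hau, hbv, huv.preimage _⟩
  obtain ⟨x₀, hx₀⟩ := hne
  have hyK : ∀ s : S, act s (y : E) ∈ K := fun s => hact.1 s y.2
  -- the orbit functions
  set gfun : (↥K →ᵇ ℝ≥0) → S → ℂ :=
    fun F s => (((F ⟨act s (y : E), hyK s⟩ : ℝ≥0) : ℝ) : ℂ) with hgfun
  have hgX : ∀ F : ↥K →ᵇ ℝ≥0, gfun F ∈ X := by
    intro F
    have hcont : @ContinuousOn E ℂ (weakTop ℝ E) _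
        (fun x => if h : x ∈ K then (((F ⟨x, h⟩ : ℝ≥0) : ℝ) : ℂ) else 0) K := by
      rw [@continuousOn_iff_continuous_restrict E ℂ (weakTop ℝ E) _ _ _]
      have hres : (K.domRestrict fun x => if h : x ∈ K then (((F ⟨x, h⟩ : ℝ≥0) : ℝ) : ℂ) else 0)
          = fun z : ↥K => (((F z : ℝ≥0) : ℝ) : ℂ) := by
        funext z
        simp [Set.restrict, dif_pos z.2]
      rw [hres]
      exact Complex.continuous_ofReal.comp (NNReal.continuous_coe.comp F.continuous)
    have := hy _ hcont
    convert this using 1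
    funext s
    simp [hgfun, dif_pos (hyK s)]
  -- pointwise bounds on `F`
  have hbound : ∀ F : ↥K →ᵇ ℝ≥0, ∃ C : ℝ, 0 ≤ C ∧ ∀ z : ↥K, ((F z : ℝ≥0) : ℝ) ≤ C := by
    intro F
    obtain ⟨C₀, hC₀⟩ := F.bounded
    set z₀ : ↥K := ⟨x₀, hx₀⟩
    refine ⟨((F z₀ : ℝ≥0) : ℝ) + C₀, ?_, ?_⟩
    · have := hC₀ z₀ z₀
      have h0 : (0 : ℝ) ≤ C₀ := le_trans dist_nonneg this
      positivity
    · intro z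
      have := hC₀ z z₀
      have hd : ((F z : ℝ≥0) : ℝ) - ((F z₀ : ℝ≥0) : ℝ) ≤ dist (F z) (F z₀) := by
        rw [NNReal.dist_eq]
        exact le_abs_self _
      linarith
  -- properties of the mean on orbit functions
  have hmean : ∀ F : ↥K →ᵇ ℝ≥0, (m (gfun F)).im = 0 ∧ 0 ≤ (m (gfun F)).re := by
    intro F
    obtain ⟨C, hC0, hCb⟩ := hbound F
    have h := mean_interval hX hm (hgX F) (fun t => by simp [hgfun]) hC0
      (fun t => by simpa [hgfun] using (F ⟨act t (y : E), hyK t⟩).2)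
      (fun t => by simpa [hgfun] using hCb ⟨act t (y : E), hyK t⟩)
    exact ⟨h.1, h.2.1⟩
  -- the positive linear functional
  have hgadd : ∀ F G : ↥K →ᵇ ℝ≥0, gfun (F + G) = gfun F + gfun G := by
    intro F G
    funext s
    simp [hgfun, NNReal.coe_add]
  have hgsmul : ∀ (c : ℝ≥0) (F : ↥K →ᵇ ℝ≥0),
      gfun (c • F) = (((c : ℝ) : ℂ)) • gfun F := by
    intro c F
    funext s
    simp [hgfun, NNReal.smul_def, NNReal.coe_mul]
  set Λ : (↥K →ᵇ ℝ≥0) →ₗ[ℝ≥0] ℝ≥0 :=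
    { toFun := fun F => Real.toNNReal ((m (gfun F)).re)
      map_add' := by
        intro F G
        show Real.toNNReal ((m (gfun (F + G))).re)
            = Real.toNNReal ((m (gfun F)).re) + Real.toNNReal ((m (gfun G)).re)
        rw [hgadd, hm.add _ (hgX F) _ (hgX G), Complex.add_re,
          Real.toNNReal_add (hmean F).2 (hmean G).2]
      map_smul' := by
        intro c F
        show Real.toNNReal ((m (gfun (c • F))).re)
            = c • Real.toNNReal ((m (gfun F)).re)
        rw [hgsmul, hm.smul _ _ (hgX F), Complex.re_ofReal_mul,
          Real.toNNReal_mul (NNReal.coe_nonneg c), Real.toNNReal_coe]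
        rfl } with hΛ
  have hone : Λ (1 : ↥K →ᵇ ℝ≥0) = 1 := by
    have hg1 : gfun (1 : ↥K →ᵇ ℝ≥0) = fun _ : S => (1 : ℂ) := by
      funext s
      simp [hgfun]
    show Real.toNNReal ((m (gfun 1)).re) = 1
    rw [hg1, hm.map_one]
    simp
  -- the restricted action maps and their continuity
  have hTcont : ∀ s : S, Continuous (Set.MapsTo.restrict (act s) K K (hact.1 s)) := by
    intro s
    exact @ContinuousOn.mapsToRestrict E E (weakTop ℝ E) (weakTop ℝ E) (act s) K K
      (hsc.1 s) (hact.1 s)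
  -- invariance of the functional
  have hinvΛ : ∀ s : S, ∀ F : ↥K →ᵇ ℝ≥0,
      Λ (F.compContinuous ⟨Set.MapsTo.restrict (act s) K K (hact.1 s), hTcont s⟩) = Λ F := by
    intro s F
    have hgcomp :
        gfun (F.compContinuous ⟨Set.MapsTo.restrict (act s) K K (hact.1 s), hTcont s⟩)
          = lTrans s (gfun F) := by
      funext t
      have hpt : Set.MapsTo.restrict (act s) K K (hact.1 s) ⟨act t (y : E), hyK t⟩
          = ⟨act (s * t) (y : E), hyK (s * t)⟩ := by
        apply Subtype.ext
        rw [Set.MapsTo.val_restrict_apply]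
        exact hact.2 s t (y : E) y.2
      show (((F (Set.MapsTo.restrict (act s) K K (hact.1 s) ⟨act t (y : E), hyK t⟩)
          : ℝ≥0) : ℝ) : ℂ) = lTrans s (gfun F) t
      rw [hpt]
      rfl
    show Real.toNNReal ((m (gfun _)).re) = Real.toNNReal ((m (gfun F)).re)
    rw [hgcomp, hm.left_inv s _ (hgX F)]
  -- apply the Riesz–Markov–Kakutani construction
  obtain ⟨μ, h1, h2, h3⟩ := rmk_invariant Λ hone
  exact ⟨μ, h1, h2, fun s A hA =>
    h3 (Set.MapsTo.restrict (act s) K K (hact.1 s)) (hTcont s) (hinvΛ s) A hA⟩
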